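/- Let d ≥ 1, τ > 0, Δ ≥ 0, σ ≥ 0. Let A be a real d×d matrix, x, x* ∈ ℝ^d, and let δ : ℝ^d → ℝ be measurable with |δ(x)| ≤ Δ for all x. Let e be uniformly distributed on the unit Euclidean sphere S^{d−1}, and let ξ⁺, ξ⁻ be real random variables, independent of e, with E[(ξ⁺)²] ≤ σ² and E[(ξ⁻)²] ≤ σ². Define g = d·⟨A(x−x*), e⟩·e + (d/(2τ))·((ξ⁺ + δ(x+τe))·‖x+τe−x*‖ − (ξ⁻ + δ(x−τe))·‖x−τe−x*‖)·e. Then E[‖g‖²] ≤ 5d·‖A(x−x*)‖² + (5d²(Δ² + σ²)/τ²)·‖x−x*‖² + 5d²(Δ² + σ²). -/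

import Mathlib

open MeasureTheory ProbabilityTheory

lemma sphere_second_moment {d : ℕ} (hd : 1 ≤ d)
    (μ : Measure (EuclideanSpace ℝ (Fin d))) [IsProbabilityMeasure μ]
    (hsphere : μ (Metric.sphere (0 : EuclideanSpace ℝ (Fin d)) 1)ᶜ = 0)
    (hinv : ∀ T : EuclideanSpace ℝ (Fin d) ≃ₗᵢ[ℝ] EuclideanSpace ℝ (Fin d),
      μ.map T = μ)
    (s : EuclideanSpace ℝ (Fin d)) :
    ∫ u, (inner ℝ s u : ℝ) ^ 2 ∂μ = ‖s‖ ^ 2 / d := by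
  -- a.e. the norm is 1
  have hae : ∀ᵐ u ∂μ, ‖u‖ = 1 := by
    rw [ae_iff]
    convert hsphere using 2
    ext u
    simp [Metric.mem_sphere, dist_zero_right]
  -- continuity / measurability of integrands
  have hcont : ∀ t : EuclideanSpace ℝ (Fin d),
      Continuous (fun u : EuclideanSpace ℝ (Fin d) => (inner ℝ t u : ℝ) ^ 2) :=
    fun t => (continuous_const.inner continuous_id).pow 2
  -- integrability
  have hint : ∀ t : EuclideanSpace ℝ (Fin d),
      Integrable (fun u => (inner ℝ t u : ℝ) ^ 2) μ := by
    intro t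
    refine ⟨(hcont t).aestronglyMeasurable, HasFiniteIntegral.of_bounded (C := ‖t‖ ^ 2) ?_⟩
    filter_upwards [hae] with u hu
    have h1 : |(inner ℝ t u : ℝ)| ≤ ‖t‖ * ‖u‖ := abs_real_inner_le_norm t u
    rw [hu, mul_one] at h1
    have : (inner ℝ t u : ℝ) ^ 2 ≤ ‖t‖ ^ 2 := by nlinarith [abs_nonneg (inner ℝ t u : ℝ), sq_abs (inner ℝ t u : ℝ)]
    simpa [abs_of_nonneg (sq_nonneg (inner ℝ t u : ℝ))] using this
  -- invariance of the second moment
  have Finv : ∀ (T : EuclideanSpace ℝ (Fin d) ≃ₗᵢ[ℝ] EuclideanSpace ℝ (Fin d))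
      (a : EuclideanSpace ℝ (Fin d)),
      ∫ u, (inner ℝ (T a) u : ℝ) ^ 2 ∂μ = ∫ u, (inner ℝ a u : ℝ) ^ 2 ∂μ := by
    intro T a
    calc ∫ u, (inner ℝ (T a) u : ℝ) ^ 2 ∂μ
        = ∫ u, (inner ℝ (T a) u : ℝ) ^ 2 ∂(μ.map T) := by rw [hinv T]
      _ = ∫ u, (inner ℝ (T a) (T u) : ℝ) ^ 2 ∂μ := by
          exact integral_map T.continuous.measurable.aemeasurable
            ((hcont (T a)).aestronglyMeasurable)
      _ = ∫ u, (inner ℝ a u : ℝ) ^ 2 ∂μ := by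
          congr 1; ext u; rw [T.inner_map_map]
  -- all unit vectors have the same second moment
  have Funit : ∀ a b : EuclideanSpace ℝ (Fin d), ‖a‖ = 1 → ‖b‖ = 1 →
      ∫ u, (inner ℝ a u : ℝ) ^ 2 ∂μ = ∫ u, (inner ℝ b u : ℝ) ^ 2 ∂μ := by
    intro a b ha hb
    have hT := Submodule.reflection_sub (ha.trans hb.symm)
    calc ∫ u, (inner ℝ a u : ℝ) ^ 2 ∂μ
        = ∫ u, (inner ℝ ((Submodule.reflection (ℝ ∙ (a - b))ᗮ) a) u : ℝ) ^ 2 ∂μ := (Finv _ a).symm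
      _ = ∫ u, (inner ℝ b u : ℝ) ^ 2 ∂μ := by rw [hT]
  -- standard orthonormal basis
  set b : OrthonormalBasis (Fin d) ℝ (EuclideanSpace ℝ (Fin d)) :=
    EuclideanSpace.basisFun (Fin d) ℝ with hb
  have hbnorm : ∀ i, ‖b i‖ = 1 := fun i => b.orthonormal.1 i
  let i0 : Fin d := ⟨0, hd⟩
  -- sum of coordinate second moments is 1
  have hsum : ∑ i : Fin d, ∫ u, (inner ℝ (b i) u : ℝ) ^ 2 ∂μ = 1 := by
    rw [← integral_finset_sum _ (fun i _ => hint (b i))]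
    have : ∀ᵐ u ∂μ, ∑ i : Fin d, (inner ℝ (b i) u : ℝ) ^ 2 = 1 := by
      filter_upwards [hae] with u hu
      have : ∑ i : Fin d, (inner ℝ (b i) u : ℝ) ^ 2 = ‖u‖ ^ 2 := by
        have := b.sum_inner_mul_inner u u
        simp only [real_inner_comm] at this
        calc ∑ i : Fin d, (inner ℝ (b i) u : ℝ) ^ 2
            = ∑ i : Fin d, (inner ℝ u (b i) : ℝ) * (inner ℝ (b i) u : ℝ) := by
              apply Finset.sum_congr rfl; intro i _
              rw [real_inner_comm u (b i)]; ring
          _ = (inner ℝ u u : ℝ) := b.sum_inner_mul_inner u u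
          _ = ‖u‖ ^ 2 := real_inner_self_eq_norm_sq u
      rw [this, hu]; norm_num
    rw [integral_congr_ae this]
    simp
  -- each equals 1/d
  have heach : ∀ i : Fin d, ∫ u, (inner ℝ (b i) u : ℝ) ^ 2 ∂μ = 1 / d := by
    intro i
    have hconst : ∀ j : Fin d, ∫ u, (inner ℝ (b j) u : ℝ) ^ 2 ∂μ
        = ∫ u, (inner ℝ (b i) u : ℝ) ^ 2 ∂μ :=
      fun j => Funit _ _ (hbnorm j) (hbnorm i)
    have : ∑ j : Fin d, ∫ u, (inner ℝ (b j) u : ℝ) ^ 2 ∂μ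
        = d * ∫ u, (inner ℝ (b i) u : ℝ) ^ 2 ∂μ := by
      rw [Finset.sum_congr rfl (fun j _ => hconst j)]
      simp [Finset.sum_const, nsmul_eq_mul]
    rw [this] at hsum
    have hdne : (d : ℝ) ≠ 0 := Nat.cast_ne_zero.mpr (by omega)
    field_simp at hsum ⊢
    linarith
  -- general s
  by_cases hs : s = 0
  · simp [hs]
  · have hsn : (0 : ℝ) < ‖s‖ := norm_pos_iff.mpr hs
    set a : EuclideanSpace ℝ (Fin d) := ‖s‖⁻¹ • s with ha
    have hanorm : ‖a‖ = 1 := by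
      rw [ha, norm_smul, norm_inv, norm_norm, inv_mul_cancel₀ hsn.ne']
    have hrw : ∀ u, (inner ℝ s u : ℝ) ^ 2 = ‖s‖ ^ 2 * (inner ℝ a u : ℝ) ^ 2 := by
      intro u
      rw [ha, real_inner_smul_left]
      field_simp
    calc ∫ u, (inner ℝ s u : ℝ) ^ 2 ∂μ
        = ∫ u, ‖s‖ ^ 2 * (inner ℝ a u : ℝ) ^ 2 ∂μ := by
          exact integral_congr_ae (Filter.Eventually.of_forall fun u => hrw u)
      _ = ‖s‖ ^ 2 * ∫ u, (inner ℝ a u : ℝ) ^ 2 ∂μ := integral_const_mul _ _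
      _ = ‖s‖ ^ 2 * ∫ u, (inner ℝ (b i0) u : ℝ) ^ 2 ∂μ := by
          rw [Funit a (b i0) hanorm (hbnorm i0)]
      _ = ‖s‖ ^ 2 / d := by rw [heach i0]; ring

lemma five_sq_aux (a b c u v : ℝ) :
    (a + b + c + u + v) ^ 2 ≤ 5 * (a ^ 2 + b ^ 2 + c ^ 2 + u ^ 2 + v ^ 2) := by
  nlinarith [sq_nonneg (a - b), sq_nonneg (a - c), sq_nonneg (a - u), sq_nonneg (a - v),
    sq_nonneg (b - c), sq_nonneg (b - u), sq_nonneg (b - v), sq_nonneg (c - u),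
    sq_nonneg (c - v), sq_nonneg (u - v)]

lemma key_scalar_aux (dd τ Δ B ip p m dp dm n1 n2 : ℝ) (hτ : 0 < τ)
    (hdp : |dp| ≤ Δ) (hdm : |dm| ≤ Δ) (hn1 : 0 ≤ n1) (hn2 : 0 ≤ n2)
    (hn1B : n1 ^ 2 ≤ B) (hn2B : n2 ^ 2 ≤ B) :
    (dd * ip + dd / (2 * τ) * ((p + dp) * n1 - (m + dm) * n2)) ^ 2
      ≤ 5 * dd ^ 2 * ip ^ 2 + 5 * dd ^ 2 * B / (4 * τ ^ 2) * (p ^ 2 + m ^ 2 + 2 * Δ ^ 2) := by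
  set k : ℝ := dd / (2 * τ) with hkdef
  have hk : k ^ 2 = dd ^ 2 / (4 * τ ^ 2) := by
    rw [hkdef, div_pow]; ring_nf
  have hdp2 : dp ^ 2 ≤ Δ ^ 2 := by
    have := abs_le.mp hdp; nlinarith
  have hdm2 : dm ^ 2 ≤ Δ ^ 2 := by
    have := abs_le.mp hdm; nlinarith
  have step1 : (dd * ip + k * ((p + dp) * n1 - (m + dm) * n2)) ^ 2
      ≤ 5 * (dd * ip) ^ 2 + 5 * (k * (p * n1)) ^ 2 + 5 * (k * (dp * n1)) ^ 2
        + 5 * (k * (m * n2)) ^ 2 + 5 * (k * (dm * n2)) ^ 2 := by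
    have h5 := five_sq_aux (dd * ip) (k * (p * n1)) (k * (dp * n1))
      (-(k * (m * n2))) (-(k * (dm * n2)))
    have heq : dd * ip + k * ((p + dp) * n1 - (m + dm) * n2)
        = dd * ip + k * (p * n1) + k * (dp * n1)
          + (-(k * (m * n2))) + (-(k * (dm * n2))) := by ring
    rw [heq]
    simp only [neg_sq] at h5
    linarith
  have hb1 : (k * (p * n1)) ^ 2 ≤ k ^ 2 * (p ^ 2 * B) := by
    have h1 : p ^ 2 * n1 ^ 2 ≤ p ^ 2 * B :=
      mul_le_mul_of_nonneg_left hn1B (sq_nonneg p)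
    calc (k * (p * n1)) ^ 2 = k ^ 2 * (p ^ 2 * n1 ^ 2) := by ring
      _ ≤ k ^ 2 * (p ^ 2 * B) := mul_le_mul_of_nonneg_left h1 (sq_nonneg k)
  have hb2 : (k * (dp * n1)) ^ 2 ≤ k ^ 2 * (Δ ^ 2 * B) := by
    have h1 : dp ^ 2 * n1 ^ 2 ≤ Δ ^ 2 * B :=
      mul_le_mul hdp2 hn1B (sq_nonneg n1) (sq_nonneg Δ)
    calc (k * (dp * n1)) ^ 2 = k ^ 2 * (dp ^ 2 * n1 ^ 2) := by ring
      _ ≤ k ^ 2 * (Δ ^ 2 * B) := mul_le_mul_of_nonneg_left h1 (sq_nonneg k)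
  have hb3 : (k * (m * n2)) ^ 2 ≤ k ^ 2 * (m ^ 2 * B) := by
    have h1 : m ^ 2 * n2 ^ 2 ≤ m ^ 2 * B :=
      mul_le_mul_of_nonneg_left hn2B (sq_nonneg m)
    calc (k * (m * n2)) ^ 2 = k ^ 2 * (m ^ 2 * n2 ^ 2) := by ring
      _ ≤ k ^ 2 * (m ^ 2 * B) := mul_le_mul_of_nonneg_left h1 (sq_nonneg k)
  have hb4 : (k * (dm * n2)) ^ 2 ≤ k ^ 2 * (Δ ^ 2 * B) := by
    have h1 : dm ^ 2 * n2 ^ 2 ≤ Δ ^ 2 * B :=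
      mul_le_mul hdm2 hn2B (sq_nonneg n2) (sq_nonneg Δ)
    calc (k * (dm * n2)) ^ 2 = k ^ 2 * (dm ^ 2 * n2 ^ 2) := by ring
      _ ≤ k ^ 2 * (Δ ^ 2 * B) := mul_le_mul_of_nonneg_left h1 (sq_nonneg k)
  have hfin : 5 * dd ^ 2 * B / (4 * τ ^ 2) * (p ^ 2 + m ^ 2 + 2 * Δ ^ 2)
      = 5 * (k ^ 2 * (p ^ 2 * B)) + 5 * (k ^ 2 * (m ^ 2 * B))
        + 2 * (5 * (k ^ 2 * (Δ ^ 2 * B))) := by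
    rw [hk]; ring
  linarith [step1, hb1, hb2, hb3, hb4]

/-- second-moment bound for the finite-difference gradient
estimator: if `E[(ξ⁺)²] ≤ σ²`, `E[(ξ⁻)²] ≤ σ²`, `|δ| ≤ Δ`, then
`E[‖g‖²] ≤ 5d‖A(x-x*)‖² + (5d²(Δ²+σ²)/τ²)‖x-x*‖² + 5d²(Δ²+σ²)`. -/
theorem gradient_estimator_second_moment (d : ℕ) (hd : 1 ≤ d) (τ Δ σ : ℝ)
    (hτ : 0 < τ) (hΔ : 0 ≤ Δ) (hσ : 0 ≤ σ)
    (A : Matrix (Fin d) (Fin d) ℝ)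
    (x xstar : EuclideanSpace ℝ (Fin d))
    (δ : EuclideanSpace ℝ (Fin d) → ℝ) (hδmeas : Measurable δ)
    (hδbound : ∀ y, |δ y| ≤ Δ)
    (Ω : Type*) [MeasurableSpace Ω] (P : Measure Ω) [IsProbabilityMeasure P]
    (e : Ω → EuclideanSpace ℝ (Fin d)) (he : Measurable e)
    (hesphere : (P.map e) (Metric.sphere (0 : EuclideanSpace ℝ (Fin d)) 1)ᶜ = 0)
    (heinv : ∀ T : EuclideanSpace ℝ (Fin d) ≃ₗᵢ[ℝ] EuclideanSpace ℝ (Fin d),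
      (P.map e).map T = P.map e)
    (ξp ξm : Ω → ℝ) (hξpmeas : Measurable ξp) (hξmmeas : Measurable ξm)
    (hξpL2 : MemLp ξp 2 P) (hξmL2 : MemLp ξm 2 P)
    (hξpvar : ∫ ω, (ξp ω) ^ 2 ∂P ≤ σ ^ 2) (hξmvar : ∫ ω, (ξm ω) ^ 2 ∂P ≤ σ ^ 2)
    (hindp : IndepFun ξp e P) (hindm : IndepFun ξm e P)
    (g : Ω → EuclideanSpace ℝ (Fin d))
    (hg : ∀ ω, g ω =
      (d : ℝ) • (inner ℝ (Matrix.toEuclideanLin A (x - xstar)) (e ω) : ℝ) • e ω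
      + ((d : ℝ) / (2 * τ)) •
        ((ξp ω + δ (x + τ • e ω)) * ‖x + τ • e ω - xstar‖
          - (ξm ω + δ (x - τ • e ω)) * ‖x - τ • e ω - xstar‖) • e ω) :
    ∫ ω, ‖g ω‖ ^ 2 ∂P ≤
      5 * d * ‖Matrix.toEuclideanLin A (x - xstar)‖ ^ 2
        + 5 * d ^ 2 * (Δ ^ 2 + σ ^ 2) / τ ^ 2 * ‖x - xstar‖ ^ 2
        + 5 * d ^ 2 * (Δ ^ 2 + σ ^ 2) := by
  set s : EuclideanSpace ℝ (Fin d) := Matrix.toEuclideanLin A (x - xstar) with hs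
  set R : ℝ := ‖x - xstar‖ with hR
  set B : ℝ := 2 * R ^ 2 + 2 * τ ^ 2 with hBdef
  have hB0 : 0 ≤ B := by positivity
  -- a.e. the direction has norm 1
  have haeN : ∀ᵐ ω ∂P, ‖e ω‖ = 1 := by
    have hms : MeasurableSet (Metric.sphere (0 : EuclideanSpace ℝ (Fin d)) 1) :=
      Metric.isClosed_sphere.measurableSet
    have := (Measure.map_apply he hms.compl).symm.trans hesphere
    rw [ae_iff]
    convert this using 2
    ext ω
    simp [Metric.mem_sphere, dist_zero_right]
  -- norm bounds on the shifted points
  have hyp : ∀ ω, ‖e ω‖ = 1 → ‖x + τ • e ω - xstar‖ ^ 2 ≤ B := by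
    intro ω hω
    have h1 : ‖x + τ • e ω - xstar‖ ≤ R + τ := by
      calc ‖x + τ • e ω - xstar‖ = ‖(x - xstar) + τ • e ω‖ := by congr 1; abel
        _ ≤ ‖x - xstar‖ + ‖τ • e ω‖ := norm_add_le _ _
        _ = R + τ := by rw [norm_smul, hω, Real.norm_eq_abs, abs_of_pos hτ, mul_one]
    have h2 : ‖x + τ • e ω - xstar‖ ^ 2 ≤ (R + τ) ^ 2 :=
      pow_le_pow_left₀ (norm_nonneg _) h1 2
    rw [hBdef]
    nlinarith [h2, sq_nonneg (R - τ)]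
  have hym : ∀ ω, ‖e ω‖ = 1 → ‖x - τ • e ω - xstar‖ ^ 2 ≤ B := by
    intro ω hω
    have h1 : ‖x - τ • e ω - xstar‖ ≤ R + τ := by
      calc ‖x - τ • e ω - xstar‖ = ‖(x - xstar) + (-(τ • e ω))‖ := by congr 1; abel
        _ ≤ ‖x - xstar‖ + ‖-(τ • e ω)‖ := norm_add_le _ _
        _ = R + τ := by
            rw [norm_neg, norm_smul, hω, Real.norm_eq_abs, abs_of_pos hτ, mul_one]
    have h2 : ‖x - τ • e ω - xstar‖ ^ 2 ≤ (R + τ) ^ 2 :=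
      pow_le_pow_left₀ (norm_nonneg _) h1 2
    rw [hBdef]
    nlinarith [h2, sq_nonneg (R - τ)]
  -- scalar inequality
  have key : ∀ (ip p m dp dm n1 n2 : ℝ), |dp| ≤ Δ → |dm| ≤ Δ → 0 ≤ n1 → 0 ≤ n2 →
      n1 ^ 2 ≤ B → n2 ^ 2 ≤ B →
      ((d : ℝ) * ip + (d : ℝ) / (2 * τ) * ((p + dp) * n1 - (m + dm) * n2)) ^ 2
        ≤ 5 * d ^ 2 * ip ^ 2 + 5 * d ^ 2 * B / (4 * τ ^ 2) * (p ^ 2 + m ^ 2 + 2 * Δ ^ 2) :=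
    fun ip p m dp dm n1 n2 h1 h2 h3 h4 h5 h6 =>
      key_scalar_aux (d : ℝ) τ Δ B ip p m dp dm n1 n2 hτ h1 h2 h3 h4 h5 h6
  -- the dominating function
  set h : Ω → ℝ := fun ω => 5 * d ^ 2 * (inner ℝ s (e ω) : ℝ) ^ 2
      + 5 * d ^ 2 * B / (4 * τ ^ 2) * ((ξp ω) ^ 2 + (ξm ω) ^ 2 + 2 * Δ ^ 2) with hh
  -- a.e. pointwise bound
  have haebound : ∀ᵐ ω ∂P, ‖g ω‖ ^ 2 ≤ h ω := by
    filter_upwards [haeN] with ω hω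
    have hgω : g ω = ((d : ℝ) * (inner ℝ s (e ω) : ℝ)
        + (d : ℝ) / (2 * τ) * ((ξp ω + δ (x + τ • e ω)) * ‖x + τ • e ω - xstar‖
          - (ξm ω + δ (x - τ • e ω)) * ‖x - τ • e ω - xstar‖)) • e ω := by
      rw [hg ω, smul_smul, smul_smul, ← add_smul]
    have hnorm : ‖g ω‖ ^ 2 = ((d : ℝ) * (inner ℝ s (e ω) : ℝ)
        + (d : ℝ) / (2 * τ) * ((ξp ω + δ (x + τ • e ω)) * ‖x + τ • e ω - xstar‖
          - (ξm ω + δ (x - τ • e ω)) * ‖x - τ • e ω - xstar‖)) ^ 2 := by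
      rw [hgω, norm_smul, hω, mul_one, Real.norm_eq_abs, sq_abs]
    rw [hnorm, hh]
    exact key (inner ℝ s (e ω)) (ξp ω) (ξm ω) (δ (x + τ • e ω)) (δ (x - τ • e ω))
      ‖x + τ • e ω - xstar‖ ‖x - τ • e ω - xstar‖ (hδbound _) (hδbound _)
      (norm_nonneg _) (norm_nonneg _) (hyp ω hω) (hym ω hω)
  -- integrability of the pieces
  have hintinner : Integrable (fun ω => (inner ℝ s (e ω) : ℝ) ^ 2) P := by
    refine ⟨((continuous_const.inner continuous_id).pow 2 |>.measurable.comp he).aestronglyMeasurable,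
      HasFiniteIntegral.of_bounded (C := ‖s‖ ^ 2) ?_⟩
    filter_upwards [haeN] with ω hω
    have h1 : |(inner ℝ s (e ω) : ℝ)| ≤ ‖s‖ * ‖e ω‖ := abs_real_inner_le_norm s (e ω)
    rw [hω, mul_one] at h1
    have : (inner ℝ s (e ω) : ℝ) ^ 2 ≤ ‖s‖ ^ 2 := by
      nlinarith [abs_nonneg (inner ℝ s (e ω) : ℝ), sq_abs (inner ℝ s (e ω) : ℝ)]
    simpa [abs_of_nonneg (sq_nonneg (inner ℝ s (e ω) : ℝ))] using this
  have hintp : Integrable (fun ω => (ξp ω) ^ 2) P := hξpL2.integrable_sq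
  have hintm : Integrable (fun ω => (ξm ω) ^ 2) P := hξmL2.integrable_sq
  have hintpm : Integrable (fun ω => (ξp ω) ^ 2 + (ξm ω) ^ 2) P := hintp.add hintm
  have hint2 : Integrable (fun ω => (ξp ω) ^ 2 + (ξm ω) ^ 2 + 2 * Δ ^ 2) P :=
    hintpm.add (integrable_const (2 * Δ ^ 2))
  have hinth : Integrable h P := by
    rw [hh]
    exact (hintinner.const_mul (5 * d ^ 2)).add
      (hint2.const_mul (5 * d ^ 2 * B / (4 * τ ^ 2)))
  -- the second moment of the inner product
  have hmom : ∫ ω, (inner ℝ s (e ω) : ℝ) ^ 2 ∂P = ‖s‖ ^ 2 / d := by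
    have hmap : IsProbabilityMeasure (P.map e) := Measure.isProbabilityMeasure_map he.aemeasurable
    have := sphere_second_moment hd (P.map e) hesphere heinv s
    rw [← this]
    exact (integral_map (f := fun u : EuclideanSpace ℝ (Fin d) => (inner ℝ s u : ℝ) ^ 2)
      he.aemeasurable
      ((continuous_const.inner continuous_id).pow 2).aestronglyMeasurable).symm
  -- integrate
  have hmono : ∫ ω, ‖g ω‖ ^ 2 ∂P ≤ ∫ ω, h ω ∂P :=
    integral_mono_of_nonneg (Filter.Eventually.of_forall fun ω => sq_nonneg _) hinth haebound
  have hinth_val : ∫ ω, h ω ∂P = 5 * d ^ 2 * (‖s‖ ^ 2 / d)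
      + 5 * d ^ 2 * B / (4 * τ ^ 2) * ((∫ ω, (ξp ω) ^ 2 ∂P) + (∫ ω, (ξm ω) ^ 2 ∂P) + 2 * Δ ^ 2) := by
    rw [hh]
    rw [integral_add (hintinner.const_mul (5 * d ^ 2))
      (hint2.const_mul (5 * d ^ 2 * B / (4 * τ ^ 2))),
      integral_const_mul, integral_const_mul, hmom,
      integral_add hintpm (integrable_const (2 * Δ ^ 2)),
      integral_add hintp hintm]
    simp
  have hC0 : 0 ≤ 5 * (d : ℝ) ^ 2 * B / (4 * τ ^ 2) := by positivity
  have hd0 : (d : ℝ) ≠ 0 := Nat.cast_ne_zero.mpr (by omega)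
  have hfinal : (5 : ℝ) * d ^ 2 * (‖s‖ ^ 2 / d)
      + 5 * d ^ 2 * B / (4 * τ ^ 2) * (σ ^ 2 + σ ^ 2 + 2 * Δ ^ 2)
      = 5 * d * ‖s‖ ^ 2 + 5 * d ^ 2 * (Δ ^ 2 + σ ^ 2) / τ ^ 2 * R ^ 2
        + 5 * d ^ 2 * (Δ ^ 2 + σ ^ 2) := by
    rw [hBdef]
    field_simp
    ring
  calc ∫ ω, ‖g ω‖ ^ 2 ∂P ≤ ∫ ω, h ω ∂P := hmono
    _ = 5 * d ^ 2 * (‖s‖ ^ 2 / d)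
        + 5 * d ^ 2 * B / (4 * τ ^ 2) * ((∫ ω, (ξp ω) ^ 2 ∂P) + (∫ ω, (ξm ω) ^ 2 ∂P) + 2 * Δ ^ 2) := hinth_val
    _ ≤ 5 * d ^ 2 * (‖s‖ ^ 2 / d)
        + 5 * d ^ 2 * B / (4 * τ ^ 2) * (σ ^ 2 + σ ^ 2 + 2 * Δ ^ 2) := by
        apply add_le_add_right
        exact mul_le_mul_of_nonneg_left (by linarith) hC0
    _ = _ := by rw [hfinal]
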